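/- Write f_i^{(m)} for the function on S̃_m given by f_i^{(m)}(v) = (e_i(t_{v(1)},…,t_{v(m)}) − e_i(t_1,…,t_m))/2. Let w ∈ S̃_n with w(q) = n for some q ∈ {1,…,n}, and define w' ∈ S̃_{n−1} by w'(k) = w(k) for k < q and w'(k) = w(k+1) for q ≤ k ≤ n−1. Then for every i ≥ 1, f_i^{(n−1)}(w') = ∑_{j=0}^{i−1} f_{i−j}^{(n)}(w)·(−t_n)^j, an identity in ℤ[t_1,…,t_n] (with ℤ[t_1,…,t_{n−1}] regarded as a subring). If instead w(q) = −n and w' is defined by the same deletion, then f_i^{(n−1)}(w') = ∑_{j=0}^{i−1} f_{i−j}^{(n)}(w)·t_n^j + ∑_{j=1}^{i} e_{i−j}(t_1,…,t_{n−1})·t_n^j. -/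

import Mathlib

open MvPolynomial

/-- The `i`-th elementary symmetric polynomial in the values `g k`. -/
noncomputable def eS {σ : Type*} [Fintype σ] {R : Type*} [CommRing R] (i : ℕ) (g : σ → R) : R :=
  ∑ S ∈ Finset.powersetCard i Finset.univ, ∏ k ∈ S, g k

/-- `R = ℤ[t_1,…,t_n]`. -/
abbrev Rn (n : ℕ) : Type := MvPolynomial (Fin n) ℤ

/-- A signed permutation of `{±1,…,±n}` in one-line notation: `w` is determined by the values
`w 0, …, w (n-1)` (representing `w(1),…,w(n)`), which are nonzero integers of absolute value
at most `n` with pairwise distinct absolute values; the condition `w(-i) = -w(i)` determines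
the rest of the bijection of `{±1,…,±n}`. -/
def IsSignedPerm {n : ℕ} (w : Fin n → ℤ) : Prop :=
  (∀ i, w i ≠ 0 ∧ (w i).natAbs ≤ n) ∧ Function.Injective fun i => (w i).natAbs

/-- The signed permutation group `S̃_n` (one-line notation). -/
def SP (n : ℕ) : Type := {w : Fin n → ℤ // IsSignedPerm w}

/-- `t_m` for `m ∈ {±1,…,±n}`, with the convention `t_{-m} = -t_m`. -/
noncomputable def tvar (n : ℕ) (m : ℤ) : Rn n :=
  if h : m.natAbs - 1 < n then C m.sign * X ⟨m.natAbs - 1, h⟩ else 0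

/-- `e_i(t_{w(1)},…,t_{w(n)}) - e_i(t_1,…,t_n)`; this is `2·f_i^{(n)}(w)`. -/
noncomputable def diffS (n : ℕ) (i : ℕ) (w : SP n) : Rn n :=
  eS i (fun k => tvar n (w.1 k)) - eS i (fun k : Fin n => (X k : Rn n))
lemma eS_zero {σ : Type*} [Fintype σ] {R : Type*} [CommRing R] (g : σ → R) : eS 0 g = 1 := by
  simp [eS]

lemma eS_deletion {R : Type*} [CommRing R] {m : ℕ} (g : Fin (m+1) → R) (q : Fin (m+1)) (i : ℕ) :
    eS (i+1) g = eS (i+1) (g ∘ q.succAbove) + g q * eS i (g ∘ q.succAbove) := by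
  have herase : (Finset.univ : Finset (Fin (m+1))).erase q = Finset.univ.map q.succAboveEmb := by
    ext x
    constructor
    · intro hx
      obtain ⟨b, hb⟩ := Fin.exists_succAbove_eq (Finset.mem_erase.1 hx).1
      exact Finset.mem_map.2 ⟨b, Finset.mem_univ b, hb⟩
    · intro hx
      obtain ⟨b, -, hb⟩ := Finset.mem_map.1 hx
      refine Finset.mem_erase.2 ⟨?_, Finset.mem_univ x⟩
      rw [← hb]
      exact Fin.succAbove_ne q b
  have huniv : (Finset.univ : Finset (Fin (m+1))) = insert q (Finset.univ.erase q) :=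
    (Finset.insert_erase (Finset.mem_univ q)).symm
  have hsub : ∀ j : ℕ, (∑ S ∈ Finset.powersetCard j (Finset.univ.erase q), ∏ k ∈ S, g k)
      = eS j (g ∘ q.succAbove) := by
    intro j
    rw [herase, Finset.powersetCard_map, Finset.sum_map]
    refine Finset.sum_congr rfl fun S _ => ?_
    rw [show (Finset.mapEmbedding q.succAboveEmb).toEmbedding S
        = S.map q.succAboveEmb from rfl, Finset.prod_map]
    rfl
  have hq : q ∉ Finset.univ.erase q := Finset.notMem_erase q _
  have hsplit := Finset.powersetCard_succ_insert hq (n := i)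
  have hdisj : Disjoint (Finset.powersetCard (i+1) (Finset.univ.erase q))
      ((Finset.powersetCard i (Finset.univ.erase q)).image (insert q)) := by
    rw [Finset.disjoint_right]
    intro S hS hS'
    simp only [Finset.mem_image] at hS
    obtain ⟨T, _, rfl⟩ := hS
    exact hq ((Finset.mem_powersetCard.1 hS').1 (Finset.mem_insert_self q T))
  have hinj : ∀ S ∈ Finset.powersetCard i (Finset.univ.erase q),
      ∀ T ∈ Finset.powersetCard i (Finset.univ.erase q), insert q S = insert q T → S = T := by
    intro S hS T hT hST
    have hqS : q ∉ S := fun h => hq ((Finset.mem_powersetCard.1 hS).1 h)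
    have hqT : q ∉ T := fun h => hq ((Finset.mem_powersetCard.1 hT).1 h)
    rw [← Finset.erase_insert hqS, ← Finset.erase_insert hqT, hST]
  have himg : ∑ S ∈ (Finset.powersetCard i (Finset.univ.erase q)).image (insert q), ∏ k ∈ S, g k
      = g q * eS i (g ∘ q.succAbove) := by
    rw [Finset.sum_image hinj, ← hsub i, Finset.mul_sum]
    refine Finset.sum_congr rfl fun S hS => ?_
    exact Finset.prod_insert fun h => hq ((Finset.mem_powersetCard.1 hS).1 h)
  calc eS (i+1) g = ∑ S ∈ Finset.powersetCard (i+1) Finset.univ, ∏ k ∈ S, g k := rfl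
    _ = ∑ S ∈ Finset.powersetCard (i+1) (insert q (Finset.univ.erase q)), ∏ k ∈ S, g k := by
        rw [← huniv]
    _ = _ := by rw [hsplit, Finset.sum_union hdisj, hsub, himg]

lemma inv_sum {R : Type*} [CommRing R] (E E' : ℕ → R) (a : R) (h0 : E' 0 = 1) (h0' : E 0 = 1)
    (hrec : ∀ s, E (s+1) = E' (s+1) + a * E' s) :
    ∀ i, E' i = ∑ j ∈ Finset.range (i+1), (-a)^j * E (i-j) := by
  intro i
  induction i with
  | zero => simp [h0, h0']
  | succ n ih =>
    have h1 : E' (n+1) = E (n+1) - a * E' n := by rw [hrec n]; ring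
    rw [h1, ih, Finset.sum_range_succ' (fun j => (-a)^j * E (n+1-j)) (n+1)]
    simp only [Nat.succ_sub_succ, Nat.sub_zero, pow_zero, one_mul]
    have hS : ∑ j ∈ Finset.range (n+1), (-a)^(j+1) * E (n-j)
        = -(a * ∑ j ∈ Finset.range (n+1), (-a)^j * E (n-j)) := by
      rw [Finset.mul_sum, ← Finset.sum_neg_distrib]
      exact Finset.sum_congr rfl fun j _ => by ring
    rw [hS]; ring

lemma sumB {R : Type*} [CommRing R] (B B' : ℕ → R) (t : R) (h0 : B 0 = 1) (h0' : B' 0 = 1)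
    (hrec : ∀ s, B (s+1) = B' (s+1) + t * B' s) :
    ∀ i, ∑ j ∈ Finset.range (i+1), t^j * B (i-j)
      = B' i + 2 * ∑ j ∈ Finset.Icc 1 i, t^j * B' (i-j) := by
  have hIcc : ∀ (N : ℕ) (f : ℕ → R), ∑ j ∈ Finset.Icc 1 N, f j
      = ∑ j ∈ Finset.range N, f (j+1) := by
    intro N f
    induction N with
    | zero => simp
    | succ n ihn =>
      rw [Finset.sum_Icc_succ_top (by omega), ihn, Finset.sum_range_succ]
  intro i
  induction i with
  | zero => simp [h0, h0']
  | succ n ih =>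
    rw [Finset.sum_range_succ' (fun j => t^j * B (n+1-j)) (n+1)]
    simp only [Nat.succ_sub_succ, Nat.sub_zero, pow_zero, one_mul]
    have hL : ∑ j ∈ Finset.range (n+1), t^(j+1) * B (n-j)
        = t * ∑ j ∈ Finset.range (n+1), t^j * B (n-j) := by
      rw [Finset.mul_sum]; exact Finset.sum_congr rfl fun j _ => by ring
    rw [hL, ih, hrec n, hIcc n, hIcc (n+1)]
    simp only [Nat.succ_sub_succ]
    rw [Finset.sum_range_succ' (fun j => t^(j+1) * B' (n-j)) n]
    simp only [Nat.sub_zero, zero_add, pow_one]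
    have hS : ∑ j ∈ Finset.range n, t^(j+1+1) * B' (n-(j+1))
        = t * ∑ j ∈ Finset.range n, t^(j+1) * B' (n-(j+1)) := by
      rw [Finset.mul_sum]; exact Finset.sum_congr rfl fun j _ => by ring
    rw [hS]; ring

/-- Lemma on restriction of the `f_i`'s (type `B`), stated with `n = m + 1`, `m ≥ 1`, so that
`S̃_{n-1} = S̃_m`.  Here `F i` plays the role of `f_i^{(n)}` and `G i` of `f_i^{(n-1)}`
(characterized by `2·F i = diff_i^{(n)}`, `2·G i = diff_i^{(n-1)}`), `ℤ[t_1,…,t_{n-1}]` is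
regarded as a subring of `ℤ[t_1,…,t_n]` via `rename Fin.castSucc`, `t_n = X (Fin.last m)`,
and `w'` is obtained from `w` by deleting the `q`-th entry of the one-line notation. -/
theorem f_restriction_typeB (m : ℕ) (hm : 1 ≤ m)
    (F : ℕ → SP (m + 1) → Rn (m + 1)) (G : ℕ → SP m → Rn m)
    (hF : ∀ i w, 2 * F i w = diffS (m + 1) i w)
    (hG : ∀ i v, 2 * G i v = diffS m i v)
    (w : SP (m + 1)) (q : Fin (m + 1)) (w' : SP m)
    (hw' : ∀ k : Fin m, w'.1 k =
      if (k : ℕ) < (q : ℕ) then w.1 (Fin.castSucc k) else w.1 k.succ)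
    (i : ℕ) (hi : 1 ≤ i) :
    (w.1 q = (m : ℤ) + 1 →
      rename Fin.castSucc (G i w') =
        ∑ j ∈ Finset.range i, F (i - j) w * (-(X (Fin.last m) : Rn (m + 1))) ^ j) ∧
    (w.1 q = -((m : ℤ) + 1) →
      rename Fin.castSucc (G i w') =
        ∑ j ∈ Finset.range i, F (i - j) w * (X (Fin.last m) : Rn (m + 1)) ^ j +
        ∑ j ∈ Finset.Icc 1 i,
          eS (i - j) (fun k : Fin m => (X (Fin.castSucc k) : Rn (m + 1))) *
            (X (Fin.last m) : Rn (m + 1)) ^ j) := by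
  have h2 : (2 : Rn (m + 1)) ≠ 0 := two_ne_zero
  set t : Rn (m + 1) := X (Fin.last m) with ht
  have hρeS : ∀ (j : ℕ) (g : Fin m → Rn m),
      rename (Fin.castSucc (n := m)) (eS j g)
        = eS j (fun k => rename (Fin.castSucc (n := m)) (g k)) := by
    intro j g
    simp only [eS, map_sum, map_prod]
  have htvar : ∀ a : ℤ, a ≠ 0 → a.natAbs ≤ m →
      rename (Fin.castSucc (n := m)) (tvar m a) = tvar (m + 1) a := by
    intro a ha hle
    have hpos : 1 ≤ a.natAbs := Int.natAbs_pos.2 ha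
    have h1 : a.natAbs - 1 < m := by omega
    have h2' : a.natAbs - 1 < m + 1 := by omega
    rw [tvar, tvar, dif_pos h1, dif_pos h2', map_mul, rename_C, rename_X]
    congr 2 <;> exact Fin.ext rfl
  have hw'2 : ∀ k : Fin m, w'.1 k = w.1 (q.succAbove k) := by
    intro k
    rw [hw' k]
    simp only [Fin.succAbove]
    by_cases h : (k : ℕ) < (q : ℕ)
    · rw [if_pos h, if_pos (show k.castSucc < q from by
        rwa [Fin.lt_def, Fin.coe_castSucc])]
    · rw [if_neg h, if_neg (show ¬ k.castSucc < q from by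
        rwa [Fin.lt_def, Fin.coe_castSucc])]
  have hkey : ∀ j : ℕ, (2 : Rn (m + 1)) * rename (Fin.castSucc (n := m)) (G j w')
      = eS j ((fun k => tvar (m + 1) (w.1 k)) ∘ q.succAbove)
        - eS j (fun k : Fin m => (X (Fin.castSucc k) : Rn (m + 1))) := by
    intro j
    have h := congrArg (rename (Fin.castSucc (n := m))) (hG j w')
    rw [map_mul, map_ofNat, diffS, map_sub, hρeS, hρeS] at h
    rw [h]
    congr 1
    · refine congrArg (eS j) (funext fun k => ?_)
      rw [htvar _ (w'.2.1 k).1 (w'.2.1 k).2, hw'2 k]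
      rfl
    · exact congrArg (eS j) (funext fun k => by rw [rename_X])
  have hrecA : ∀ s, eS (s + 1) (fun k : Fin (m + 1) => (X k : Rn (m + 1)))
      = eS (s + 1) (fun k : Fin m => (X (Fin.castSucc k) : Rn (m + 1)))
        + t * eS s (fun k : Fin m => (X (Fin.castSucc k) : Rn (m + 1))) := by
    intro s
    have h := eS_deletion (fun k : Fin (m + 1) => (X k : Rn (m + 1))) (Fin.last m) s
    simpa [Fin.succAbove_last, Function.comp_def, ht] using h
  have hrecE : ∀ s, eS (s + 1) (fun k => tvar (m + 1) (w.1 k))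
      = eS (s + 1) ((fun k => tvar (m + 1) (w.1 k)) ∘ q.succAbove)
        + tvar (m + 1) (w.1 q) * eS s ((fun k => tvar (m + 1) (w.1 k)) ∘ q.succAbove) :=
    fun s => eS_deletion _ q s
  have hdiff : ∀ s, eS s (fun k => tvar (m + 1) (w.1 k))
      - eS s (fun k : Fin (m + 1) => (X k : Rn (m + 1))) = 2 * F s w := by
    intro s; rw [hF s w]; rfl
  have hF0 : (2 : Rn (m + 1)) * F 0 w = 0 := by
    rw [hF, diffS, eS_zero, eS_zero, sub_self]
  constructor
  · -- case a : w q = m+1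
    intro hq
    have htq : tvar (m + 1) (w.1 q) = t := by
      rw [hq, tvar]
      have hna : ((m : ℤ) + 1).natAbs = m + 1 := by omega
      have hs : ((m : ℤ) + 1).sign = 1 := Int.sign_eq_one_of_pos (by positivity)
      simp only [hna, hs, Nat.add_sub_cancel]
      rw [dif_pos (Nat.lt_succ_self m)]
      simp [Fin.last, ht]
    have hrecEa : ∀ s, eS (s + 1) (fun k => tvar (m + 1) (w.1 k))
        = eS (s + 1) ((fun k => tvar (m + 1) (w.1 k)) ∘ q.succAbove)
          + t * eS s ((fun k => tvar (m + 1) (w.1 k)) ∘ q.succAbove) := by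
      intro s; rw [hrecE s, htq]
    have hEinv : eS i ((fun k => tvar (m + 1) (w.1 k)) ∘ q.succAbove)
        = ∑ j ∈ Finset.range (i + 1), (-t) ^ j * eS (i - j) (fun k => tvar (m + 1) (w.1 k)) :=
      inv_sum (fun s => eS s (fun k => tvar (m + 1) (w.1 k)))
        (fun s => eS s ((fun k => tvar (m + 1) (w.1 k)) ∘ q.succAbove)) t
        (eS_zero _) (eS_zero _) hrecEa i
    have hAinv : eS i (fun k : Fin m => (X (Fin.castSucc k) : Rn (m + 1)))
        = ∑ j ∈ Finset.range (i + 1),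
            (-t) ^ j * eS (i - j) (fun k : Fin (m + 1) => (X k : Rn (m + 1))) :=
      inv_sum (fun s => eS s (fun k : Fin (m + 1) => (X k : Rn (m + 1))))
        (fun s => eS s (fun k : Fin m => (X (Fin.castSucc k) : Rn (m + 1)))) t
        (eS_zero _) (eS_zero _) hrecA i
    refine mul_left_cancel₀ h2 ?_
    rw [hkey i, hEinv, hAinv, ← Finset.sum_sub_distrib]
    have hterm : ∀ j ∈ Finset.range (i + 1),
        (-t) ^ j * eS (i - j) (fun k => tvar (m + 1) (w.1 k))
          - (-t) ^ j * eS (i - j) (fun k : Fin (m + 1) => (X k : Rn (m + 1)))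
        = (-t) ^ j * (2 * F (i - j) w) := fun j _ => by rw [← mul_sub, hdiff]
    rw [Finset.sum_congr rfl hterm, Finset.sum_range_succ, Nat.sub_self, hF0,
      mul_zero, add_zero, Finset.mul_sum]
    exact Finset.sum_congr rfl fun j _ => by ring
  · -- case b : w q = -(m+1)
    intro hq
    have htq : tvar (m + 1) (w.1 q) = -t := by
      rw [hq, tvar]
      have hna : (-((m : ℤ) + 1)).natAbs = m + 1 := by omega
      have hs : (-((m : ℤ) + 1)).sign = -1 := by
        rw [Int.sign_neg, Int.sign_eq_one_of_pos (by positivity)]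
      simp only [hna, hs, Nat.add_sub_cancel]
      rw [dif_pos (Nat.lt_succ_self m)]
      simp [Fin.last, ht]
    have hrecEb : ∀ s, eS (s + 1) (fun k => tvar (m + 1) (w.1 k))
        = eS (s + 1) ((fun k => tvar (m + 1) (w.1 k)) ∘ q.succAbove)
          + (-t) * eS s ((fun k => tvar (m + 1) (w.1 k)) ∘ q.succAbove) := by
      intro s; rw [hrecE s, htq]
    have hEinv : eS i ((fun k => tvar (m + 1) (w.1 k)) ∘ q.succAbove)
        = ∑ j ∈ Finset.range (i + 1), (-(-t)) ^ j * eS (i - j) (fun k => tvar (m + 1) (w.1 k)) :=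
      inv_sum (fun s => eS s (fun k => tvar (m + 1) (w.1 k)))
        (fun s => eS s ((fun k => tvar (m + 1) (w.1 k)) ∘ q.succAbove)) (-t)
        (eS_zero _) (eS_zero _) hrecEb i
    have hEi : eS i ((fun k => tvar (m + 1) (w.1 k)) ∘ q.succAbove)
        = ∑ j ∈ Finset.range (i + 1), t ^ j * eS (i - j) (fun k => tvar (m + 1) (w.1 k)) := by
      rw [hEinv]
      exact Finset.sum_congr rfl fun j _ => by rw [neg_neg]
    have hB : ∑ j ∈ Finset.range (i + 1),
          t ^ j * eS (i - j) (fun k : Fin (m + 1) => (X k : Rn (m + 1)))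
        = eS i (fun k : Fin m => (X (Fin.castSucc k) : Rn (m + 1)))
          + 2 * ∑ j ∈ Finset.Icc 1 i,
              t ^ j * eS (i - j) (fun k : Fin m => (X (Fin.castSucc k) : Rn (m + 1))) :=
      sumB (fun s => eS s (fun k : Fin (m + 1) => (X k : Rn (m + 1))))
        (fun s => eS s (fun k : Fin m => (X (Fin.castSucc k) : Rn (m + 1)))) t
        (eS_zero _) (eS_zero _) hrecA i
    have hAi : eS i (fun k : Fin m => (X (Fin.castSucc k) : Rn (m + 1)))
        = ∑ j ∈ Finset.range (i + 1),
            t ^ j * eS (i - j) (fun k : Fin (m + 1) => (X k : Rn (m + 1)))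
          - 2 * ∑ j ∈ Finset.Icc 1 i,
              t ^ j * eS (i - j) (fun k : Fin m => (X (Fin.castSucc k) : Rn (m + 1))) := by
      rw [hB]; ring
    refine mul_left_cancel₀ h2 ?_
    rw [hkey i, hEi, hAi]
    have hterm : ∀ j ∈ Finset.range (i + 1),
        t ^ j * eS (i - j) (fun k => tvar (m + 1) (w.1 k))
          - t ^ j * eS (i - j) (fun k : Fin (m + 1) => (X k : Rn (m + 1)))
        = t ^ j * (2 * F (i - j) w) := fun j _ => by rw [← mul_sub, hdiff]
    have hSub : ∑ j ∈ Finset.range (i + 1), t ^ j * eS (i - j) (fun k => tvar (m + 1) (w.1 k))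
          - ∑ j ∈ Finset.range (i + 1),
              t ^ j * eS (i - j) (fun k : Fin (m + 1) => (X k : Rn (m + 1)))
        = 2 * ∑ j ∈ Finset.range i, F (i - j) w * t ^ j := by
      rw [← Finset.sum_sub_distrib, Finset.sum_congr rfl hterm, Finset.sum_range_succ,
        Nat.sub_self, hF0, mul_zero, add_zero, Finset.mul_sum]
      exact Finset.sum_congr rfl fun j _ => by ring
    have hC : ∑ j ∈ Finset.Icc 1 i,
          t ^ j * eS (i - j) (fun k : Fin m => (X (Fin.castSucc k) : Rn (m + 1)))
        = ∑ j ∈ Finset.Icc 1 i,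
            eS (i - j) (fun k : Fin m => (X (Fin.castSucc k) : Rn (m + 1))) * t ^ j :=
      Finset.sum_congr rfl fun j _ => mul_comm _ _
    calc ∑ j ∈ Finset.range (i + 1), t ^ j * eS (i - j) (fun k => tvar (m + 1) (w.1 k))
          - (∑ j ∈ Finset.range (i + 1),
              t ^ j * eS (i - j) (fun k : Fin (m + 1) => (X k : Rn (m + 1)))
            - 2 * ∑ j ∈ Finset.Icc 1 i,
                t ^ j * eS (i - j) (fun k : Fin m => (X (Fin.castSucc k) : Rn (m + 1))))
        = (∑ j ∈ Finset.range (i + 1), t ^ j * eS (i - j) (fun k => tvar (m + 1) (w.1 k))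
            - ∑ j ∈ Finset.range (i + 1),
                t ^ j * eS (i - j) (fun k : Fin (m + 1) => (X k : Rn (m + 1))))
          + 2 * ∑ j ∈ Finset.Icc 1 i,
              t ^ j * eS (i - j) (fun k : Fin m => (X (Fin.castSucc k) : Rn (m + 1))) := by
          ring
      _ = 2 * (∑ j ∈ Finset.range i, F (i - j) w * t ^ j
          + ∑ j ∈ Finset.Icc 1 i,
              eS (i - j) (fun k : Fin m => (X (Fin.castSucc k) : Rn (m + 1))) * t ^ j) := by
          rw [hSub, hC]; ring
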